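/- Let X, Y be Polish spaces. The map χ₂ : P_w(X × P_w(Y)) → P_w(X × Y), defined by χ₂(ν)(X' × Y') = ∫_{X' × P_w(Y)} ζ(Y') ν(dx, dζ), is continuous when both measure spaces carry the weak-* topology. -/

import Mathlib

open MeasureTheory Filter Topology BoundedContinuousFunction ProbabilityTheory

instance {Ω : Type*} [MeasurableSpace Ω] : MeasurableSpace (ProbabilityMeasure Ω) :=
  Subtype.instMeasurableSpace

/-- Weak-* convergence of a sequence of measures. -/
def WeakTendsto {Ω : Type*} [MeasurableSpace Ω] [TopologicalSpace Ω]
    (μ : ℕ → Measure Ω) (μ₀ : Measure Ω) : Prop :=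
  ∀ f : Ω →ᵇ ℝ, Tendsto (fun n => ∫ x, f x ∂(μ n)) atTop (𝓝 (∫ x, f x ∂μ₀))

section Aux

variable {X Y : Type*}
    [MeasurableSpace X] [TopologicalSpace X] [PolishSpace X] [BorelSpace X]
    [MeasurableSpace Y] [TopologicalSpace Y] [PolishSpace Y] [BorelSpace Y]

lemma aux_sect {G : Set (X × Y)} (hG : MeasurableSet G) (x : X) (ρ : Measure Y) [SFinite ρ] :
    (Measure.dirac x).prod ρ G = ρ (Prod.mk x ⁻¹' G) := by
  rw [Measure.prod_apply hG, lintegral_dirac' _ (measurable_measure_prodMk_left hG)]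

lemma aux_opens {xs : ℕ → X} {x : X} (hx : Tendsto xs atTop (𝓝 x))
    {ζs : ℕ → ProbabilityMeasure Y} {ζ : ProbabilityMeasure Y} (hζ : Tendsto ζs atTop (𝓝 ζ))
    {G : Set (X × Y)} (hG : IsOpen G) :
    (Measure.dirac x).prod (ζ : Measure Y) G ≤
      atTop.liminf fun n => (Measure.dirac (xs n)).prod (ζs n : Measure Y) G := by
  letI := TopologicalSpace.upgradeIsCompletelyMetrizable Y
  rw [aux_sect hG.measurableSet]
  set S : Set Y := Prod.mk x ⁻¹' G with hS
  by_cases hSe : S = ∅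
  · rw [hSe]
    simp
  have hSne : S.Nonempty := Set.nonempty_iff_ne_empty.mpr hSe
  -- index of "good rectangles"
  set ι' := {q : Set X × Set Y // IsOpen q.1 ∧ IsOpen q.2 ∧ x ∈ q.1 ∧ q.1 ×ˢ q.2 ⊆ G} with hι'
  have hsub : ∀ q : ι', q.1.2 ⊆ S := by
    rintro ⟨⟨u, v⟩, hu, hv, hxu, huv⟩ y hy
    exact huv ⟨hxu, hy⟩
  have hcover : (⋃ q : ι', q.1.2) = S := by
    apply subset_antisymm
    · exact Set.iUnion_subset hsub
    · intro y hy
      obtain ⟨u, v, hu, hv, hxu, hyv, huv⟩ := isOpen_prod_iff.mp hG x y hy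
      exact Set.mem_iUnion.mpr ⟨⟨(u, v), hu, hv, hxu, huv⟩, hyv⟩
  obtain ⟨T, hTc, hT⟩ :=
    TopologicalSpace.isOpen_iUnion_countable (fun q : ι' => q.1.2) (fun q => q.2.2.1)
  have hTne : T.Nonempty := by
    rcases Set.eq_empty_or_nonempty T with hTe | hTne
    · exfalso
      rw [hTe] at hT
      simp only [Set.mem_empty_iff_false, Set.iUnion_of_empty, Set.iUnion_empty] at hT
      rw [hcover] at hT
      exact hSne.ne_empty hT.symm
    · exact hTne
  obtain ⟨e, he⟩ := hTc.exists_eq_range hTne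
  have hSeq : S = ⋃ n, (e n).1.2 := by
    rw [← hcover, ← hT, he]
    simp [Set.biUnion_range]
  set V : ℕ → Set Y := fun k => ⋃ n ∈ Finset.range k, (e n).1.2 with hV
  have hVmono : Monotone V := by
    intro a b hab
    apply Set.biUnion_subset_biUnion_left
    intro n hn
    exact Finset.mem_range.mpr (lt_of_lt_of_le (Finset.mem_range.mp hn) hab)
  have hVunion : (⋃ k, V k) = S := by
    apply subset_antisymm
    · refine Set.iUnion_subset fun k => ?_
      refine Set.iUnion₂_subset fun n _ => hsub (e n)
    · rw [hSeq]
      refine Set.iUnion_subset fun n => ?_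
      intro y hy
      exact Set.mem_iUnion.mpr ⟨n + 1,
        Set.mem_biUnion (Finset.mem_range.mpr (Nat.lt_succ_self n)) hy⟩
  have hVopen : ∀ k, IsOpen (V k) := fun k =>
    isOpen_biUnion fun n _ => (e n).2.2.1
  have htend : Tendsto (fun k => (ζ : Measure Y) (V k)) atTop (𝓝 ((ζ : Measure Y) S)) := by
    have := tendsto_measure_iUnion_atTop (μ := (ζ : Measure Y)) hVmono
    rwa [hVunion] at this
  refine le_of_forall_lt fun c hc => ?_
  obtain ⟨k, hk⟩ := (htend.eventually (lt_mem_nhds hc)).exists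
  set U' : Set X := ⋂ n ∈ Finset.range k, (e n).1.1 with hU'
  have hU'open : IsOpen U' := isOpen_biInter_finset fun n _ => (e n).2.1
  have hxU' : x ∈ U' := Set.mem_biInter fun n _ => (e n).2.2.2.1
  have hUV : U' ×ˢ V k ⊆ G := by
    rintro ⟨a, b⟩ ⟨ha, hb⟩
    obtain ⟨n, hn, hbn⟩ := Set.mem_iUnion₂.mp hb
    exact (e n).2.2.2.2 ⟨Set.mem_iInter₂.mp ha n hn, hbn⟩
  have hev : ∀ᶠ n in atTop, xs n ∈ U' := hx (hU'open.mem_nhds hxU')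
  have hle : ∀ᶠ n in atTop,
      (ζs n : Measure Y) (V k) ≤ (Measure.dirac (xs n)).prod (ζs n : Measure Y) G := by
    filter_upwards [hev] with n hn
    rw [aux_sect hG.measurableSet]
    exact measure_mono fun y hy => hUV ⟨hn, hy⟩
  have hport : ((ζ : Measure Y)) (V k) ≤ atTop.liminf fun n => (ζs n : Measure Y) (V k) :=
    ProbabilityMeasure.le_liminf_measure_open_of_tendsto hζ (hVopen k)
  exact lt_of_lt_of_le hk (le_trans hport (liminf_le_liminf hle))

lemma aux_integral_prod_dirac (f : (X × Y) →ᵇ ℝ) (a : X) (ρ : Measure Y)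
    [IsProbabilityMeasure ρ] :
    ∫ z, f z ∂((Measure.dirac a).prod ρ) = ∫ y, f (a, y) ∂ρ := by
  letI := TopologicalSpace.upgradeIsCompletelyMetrizable X
  rw [MeasureTheory.integral_prod _ (f.integrable _), integral_dirac]

lemma aux_tendsto (f : (X × Y) →ᵇ ℝ) {xs : ℕ → X} {x : X} (hx : Tendsto xs atTop (𝓝 x))
    {ζs : ℕ → ProbabilityMeasure Y} {ζ : ProbabilityMeasure Y} (hζ : Tendsto ζs atTop (𝓝 ζ)) :
    Tendsto (fun n => ∫ y, f (xs n, y) ∂(ζs n : Measure Y)) atTop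
      (𝓝 (∫ y, f (x, y) ∂(ζ : Measure Y))) := by
  have key := tendsto_integral_of_forall_integral_le_liminf_integral
    (μ := (Measure.dirac x).prod (ζ : Measure Y))
    (μs := fun n => (Measure.dirac (xs n)).prod (ζs n : Measure Y))
    (fun g hg => integral_le_liminf_integral_of_forall_isOpen_measure_le_liminf_measure hg
      (fun G hGopen => aux_opens hx hζ hGopen)) f
  rw [aux_integral_prod_dirac f x (ζ : Measure Y)] at key
  exact key.congr fun n => aux_integral_prod_dirac f (xs n) (ζs n : Measure Y)

lemma aux_cont (f : (X × Y) →ᵇ ℝ) :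
    Continuous (fun p : X × ProbabilityMeasure Y => ∫ y, f (p.1, y) ∂(p.2 : Measure Y)) := by
  apply SeqContinuous.continuous
  intro u p hu
  have hx : Tendsto (fun n => (u n).1) atTop (𝓝 p.1) := ((continuous_fst.tendsto p).comp hu)
  have hζ : Tendsto (fun n => (u n).2) atTop (𝓝 p.2) := ((continuous_snd.tendsto p).comp hu)
  exact aux_tendsto f hx hζ

/-- The bundled bounded continuous function `p ↦ ∫ y, f (p.1, y) ∂p.2`. -/
noncomputable def gB (f : (X × Y) →ᵇ ℝ) : (X × ProbabilityMeasure Y) →ᵇ ℝ :=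
  BoundedContinuousFunction.ofNormedAddCommGroup
    (fun p => ∫ y, f (p.1, y) ∂(p.2 : Measure Y)) (aux_cont f) ‖f‖
    (by
      intro p
      calc ‖∫ y, f (p.1, y) ∂(p.2 : Measure Y)‖
          ≤ ‖f‖ * ((p.2 : Measure Y) Set.univ).toReal :=
            norm_integral_le_of_norm_le_const (Eventually.of_forall fun y => f.norm_coe_le_norm _)
        _ = ‖f‖ := by simp)

@[simp] lemma gB_apply (f : (X × Y) →ᵇ ℝ) (p : X × ProbabilityMeasure Y) :
    gB f p = ∫ y, f (p.1, y) ∂(p.2 : Measure Y) := rfl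

/-- The kernel sending `(x, ζ)` to `ζ`. -/
noncomputable def sndK : Kernel (X × ProbabilityMeasure Y) Y where
  toFun p := (p.2 : Measure Y)
  measurable' := measurable_subtype_coe.comp measurable_snd

instance : IsMarkovKernel (sndK (X := X) (Y := Y)) := ⟨fun p => p.2.prop⟩

/-- The kernel sending `(x, ζ)` to `δ_x ⊗ ζ`. -/
noncomputable def kap : Kernel (X × ProbabilityMeasure Y) (X × Y) :=
  (Kernel.deterministic Prod.fst measurable_fst) ×ₖ sndK

instance : IsMarkovKernel (kap (X := X) (Y := Y)) := by
  rw [kap]; infer_instance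

lemma kap_apply (p : X × ProbabilityMeasure Y) :
    kap p = (Measure.dirac p.1).prod (p.2 : Measure Y) := by
  rw [kap, Kernel.prod_apply, Kernel.deterministic_apply]
  rfl

lemma bind_kap_prob (μ : Measure (X × ProbabilityMeasure Y)) [IsProbabilityMeasure μ] :
    IsProbabilityMeasure (μ.bind fun p => kap p) := by
  constructor
  rw [Measure.bind_apply MeasurableSet.univ (kap (X := X) (Y := Y)).measurable.aemeasurable]
  simp [measure_univ]

lemma m_eq (μ : Measure (X × ProbabilityMeasure Y)) [IsProbabilityMeasure μ]
    (m : Measure (X × Y)) [IsProbabilityMeasure m]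
    (h : ∀ s t : Set _, MeasurableSet s → MeasurableSet t →
      m (s ×ˢ t) =
        ∫⁻ p in s ×ˢ (Set.univ : Set (ProbabilityMeasure Y)), (p.2 : Measure Y) t ∂μ) :
    m = μ.bind fun p => kap p := by
  haveI := bind_kap_prob μ
  refine MeasureTheory.ext_of_generate_finite _ generateFrom_prod.symm isPiSystem_prod ?_ ?_
  · rintro _ ⟨s, hs, t, ht, rfl⟩
    rw [h s t hs ht, Measure.bind_apply (hs.prod ht) (kap (X := X) (Y := Y)).measurable.aemeasurable,
      ← lintegral_indicator (hs.prod MeasurableSet.univ)]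
    congr 1
    funext p
    rw [kap_apply, Measure.prod_prod, Measure.dirac_apply' _ hs]
    by_cases hp : p.1 ∈ s
    · have hpmem : p ∈ s ×ˢ (Set.univ : Set (ProbabilityMeasure Y)) := ⟨hp, trivial⟩
      simp [Set.indicator_of_mem, hp, hpmem]
    · have hpmem : p ∉ s ×ˢ (Set.univ : Set (ProbabilityMeasure Y)) := fun hmem => hp hmem.1
      simp [Set.indicator_of_notMem, hp, hpmem]
  · simp [measure_univ]

lemma integral_bind_kap_nonneg (μ : Measure (X × ProbabilityMeasure Y)) [IsProbabilityMeasure μ]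
    (f : (X × Y) →ᵇ ℝ) (hf : 0 ≤ f) :
    ∫ z, f z ∂(μ.bind fun p => kap p) =
      ∫ p, ∫ y, f (p.1, y) ∂(p.2 : Measure Y) ∂μ := by
  haveI := bind_kap_prob μ
  have fmeas : Measurable f := f.continuous.measurable
  have hfnn : ∀ z, 0 ≤ f z := fun z => hf z
  have geq : (fun p : X × ProbabilityMeasure Y => ∫ y, f (p.1, y) ∂(p.2 : Measure Y)) =
      fun p => ∫ z, f z ∂(kap p) := by
    funext p
    rw [kap_apply]
    exact (aux_integral_prod_dirac f p.1 (p.2 : Measure Y)).symm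
  have hgsm : StronglyMeasurable fun p : X × ProbabilityMeasure Y => ∫ z, f z ∂(kap p) :=
    MeasureTheory.StronglyMeasurable.integral_kernel_prod_right
      (κ := kap) (f := fun _ z => f z)
      (f.continuous.stronglyMeasurable.comp_measurable measurable_snd)
  have gnn : ∀ p : X × ProbabilityMeasure Y, 0 ≤ ∫ z, f z ∂(kap p) :=
    fun p => integral_nonneg fun z => hfnn _
  rw [geq, integral_eq_lintegral_of_nonneg_ae (Eventually.of_forall hfnn)
      fmeas.aestronglyMeasurable,
    integral_eq_lintegral_of_nonneg_ae (Eventually.of_forall gnn)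
      hgsm.aestronglyMeasurable]
  congr 1
  have hmeas : Measurable fun z : X × Y => ENNReal.ofReal (f z) :=
    ENNReal.measurable_ofReal.comp fmeas
  rw [Measure.lintegral_bind (kap (X := X) (Y := Y)).measurable.aemeasurable hmeas.aemeasurable]
  congr 1
  funext p
  rw [kap_apply] at *
  rw [MeasureTheory.lintegral_prod _ hmeas.aemeasurable,
    lintegral_dirac' _ (hmeas.lintegral_prod_right')]
  have hInt : Integrable (fun y => f (p.1, y)) (p.2 : Measure Y) := by
    have : (fun y => f (p.1, y)) =
        ⇑(f.compContinuous (⟨fun y => (p.1, y), by continuity⟩ : C(Y, X × Y))) := rfl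
    rw [this]
    exact BoundedContinuousFunction.integrable _ _
  rw [aux_integral_prod_dirac f p.1 (p.2 : Measure Y),
    ofReal_integral_eq_lintegral_ofReal hInt (Eventually.of_forall fun y => hfnn _)]

lemma integral_bind_kap (μ : Measure (X × ProbabilityMeasure Y)) [IsProbabilityMeasure μ]
    (f : (X × Y) →ᵇ ℝ) :
    ∫ z, f z ∂(μ.bind fun p => kap p) =
      ∫ p, ∫ y, f (p.1, y) ∂(p.2 : Measure Y) ∂μ := by
  haveI := bind_kap_prob μ
  have h1 := integral_bind_kap_nonneg μ (f + const (X × Y) ‖f‖) f.add_norm_nonneg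
  rw [f.integral_add_const ‖f‖] at h1
  simp only [measure_univ, probReal_univ, ENNReal.toReal_one, one_smul, smul_eq_mul, one_mul] at h1
  have inner : ∀ p : X × ProbabilityMeasure Y,
      ∫ y, (f + const (X × Y) ‖f‖) (p.1, y) ∂(p.2 : Measure Y) =
        (∫ y, f (p.1, y) ∂(p.2 : Measure Y)) + ‖f‖ := by
    intro p
    have hInt : Integrable (fun y => f (p.1, y)) (p.2 : Measure Y) := by
      have : (fun y => f (p.1, y)) =
          ⇑(f.compContinuous (⟨fun y => (p.1, y), by continuity⟩ : C(Y, X × Y))) := rfl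
      rw [this]
      exact BoundedContinuousFunction.integrable _ _
    simp only [BoundedContinuousFunction.coe_add, Pi.add_apply,
      BoundedContinuousFunction.const_apply]
    rw [integral_add hInt (integrable_const _), integral_const]
    simp [measure_univ]
  simp only [inner] at h1
  have geq : (fun p : X × ProbabilityMeasure Y => ∫ y, f (p.1, y) ∂(p.2 : Measure Y)) =
      fun p => ∫ z, f z ∂(kap p) := by
    funext p
    rw [kap_apply]
    exact (aux_integral_prod_dirac f p.1 (p.2 : Measure Y)).symm
  have hgsm : StronglyMeasurable fun p : X × ProbabilityMeasure Y => ∫ z, f z ∂(kap p) :=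
    MeasureTheory.StronglyMeasurable.integral_kernel_prod_right
      (κ := kap) (f := fun _ z => f z)
      (f.continuous.stronglyMeasurable.comp_measurable measurable_snd)
  have hGInt : Integrable (fun p : X × ProbabilityMeasure Y =>
      ∫ y, f (p.1, y) ∂(p.2 : Measure Y)) μ := by
    rw [geq]
    refine ⟨hgsm.aestronglyMeasurable, ?_⟩
    apply MeasureTheory.HasFiniteIntegral.of_bounded (C := ‖f‖)
    filter_upwards with p
    exact norm_integral_le_of_norm_le_const
      (Eventually.of_forall fun z => f.norm_coe_le_norm z) |>.trans (by simp [measure_univ])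
  rw [integral_add hGInt (integrable_const _), integral_const] at h1
  simp only [measure_univ, probReal_univ, ENNReal.toReal_one, smul_eq_mul, one_mul] at h1
  linarith

end Aux

theorem stmt9 {X Y : Type*}
    [MeasurableSpace X] [TopologicalSpace X] [PolishSpace X] [BorelSpace X]
    [MeasurableSpace Y] [TopologicalSpace Y] [PolishSpace Y] [BorelSpace Y]
    (ν : ℕ → Measure (X × ProbabilityMeasure Y)) (ν₀ : Measure (X × ProbabilityMeasure Y))
    [∀ n, IsProbabilityMeasure (ν n)] [IsProbabilityMeasure ν₀]
    (hν : WeakTendsto ν ν₀)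
    (m : ℕ → Measure (X × Y)) (m₀ : Measure (X × Y))
    [∀ n, IsProbabilityMeasure (m n)] [IsProbabilityMeasure m₀]
    (hm : ∀ n, ∀ s t : Set _, MeasurableSet s → MeasurableSet t →
      m n (s ×ˢ t) =
        ∫⁻ p in s ×ˢ (Set.univ : Set (ProbabilityMeasure Y)), (p.2 : Measure Y) t ∂(ν n))
    (hm₀ : ∀ s t : Set _, MeasurableSet s → MeasurableSet t →
      m₀ (s ×ˢ t) =
        ∫⁻ p in s ×ˢ (Set.univ : Set (ProbabilityMeasure Y)), (p.2 : Measure Y) t ∂ν₀) :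
    WeakTendsto m m₀ := by
  intro f
  have hm' : ∀ n, m n = (ν n).bind fun p => kap p := fun n => m_eq (ν n) (m n) (hm n)
  have hm0' : m₀ = ν₀.bind fun p => kap p := m_eq ν₀ m₀ hm₀
  simp only [hm', hm0', integral_bind_kap]
  exact hν (gB f)
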